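/- With the setup of the previous item (action of SL₂(ℤ) on 𝕋², F₁ = {L(±1), U(±1)}, F₂ = {±e₁, ±e₂}): for every ε > 0, if μ is a Borel probability measure on 𝕋² with ‖h·μ − μ‖ < ε/40 for all h ∈ F₂ (where (h·μ) denotes the measure with density χ ↦ e^{2πi⟨h,χ⟩} against μ, and the norm is the total variation of the complex measure h·μ − μ) and ‖g_*μ − μ‖ < ε/40 for all g ∈ F₁, then ‖μ − δ₀‖ < ε. That is, SL₂(ℤ) ↷ ℤ² has property (T⁺⁺) with constant 40. -/

import Mathlib

open MeasureTheory Matrix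

/-- The total variation distance between two finite measures. -/
noncomputable def tvDist {α : Type*} [MeasurableSpace α]
    (μ ν : Measure α) [IsFiniteMeasure μ] [IsFiniteMeasure ν] : ℝ :=
  ((μ.toSignedMeasure - ν.toSignedMeasure).totalVariation Set.univ).toReal

namespace TppAux

open Set Real

lemma tv_bound {α : Type*} [MeasurableSpace α] (μ ν : Measure α) [IsFiniteMeasure μ]
    [IsFiniteMeasure ν] {B : Set α} (hB : MeasurableSet B) :
    (μ B).toReal ≤ (ν B).toReal + tvDist μ ν := by
  set s := μ.toSignedMeasure - ν.toSignedMeasure with hs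
  have h1 : s B = (μ B).toReal - (ν B).toReal := Measure.toSignedMeasure_sub_apply hB
  set j := s.toJordanDecomposition with hj
  have h2 : s B = (j.posPart B).toReal - (j.negPart B).toReal := by
    conv_lhs => rw [← s.toSignedMeasure_toJordanDecomposition]
    exact Measure.toSignedMeasure_sub_apply hB
  have hfin : s.totalVariation univ ≠ ⊤ := by
    rw [SignedMeasure.totalVariation]
    finiteness
  have h3 : (j.posPart B).toReal ≤ tvDist μ ν := by
    have : j.posPart B ≤ s.totalVariation univ := by
      refine le_trans (measure_mono (subset_univ B)) ?_
      rw [SignedMeasure.totalVariation]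
      exact Measure.le_iff'.mp (Measure.le_add_right le_rfl) univ
    exact ENNReal.toReal_mono hfin this
  have h4 : (0:ℝ) ≤ (j.negPart B).toReal := ENNReal.toReal_nonneg
  rw [tvDist] at *
  linarith [h1.symm.trans h2]

lemma prob_compl_toReal {α : Type*} [MeasurableSpace α] (μ : Measure α) [IsProbabilityMeasure μ]
    {B : Set α} (hB : MeasurableSet B) : (μ Bᶜ).toReal = 1 - (μ B).toReal := by
  rw [prob_compl_eq_one_sub hB, ENNReal.toReal_sub_of_le prob_le_one ENNReal.one_ne_top,
    ENNReal.toReal_one]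

lemma tv_dirac_le {α : Type*} [MeasurableSpace α] [MeasurableSingletonClass α]
    (μ : Measure α) [IsProbabilityMeasure μ] (z : α) :
    tvDist μ (Measure.dirac z) ≤ 2 * (μ {z}ᶜ).toReal := by
  set ν := (Measure.dirac z : Measure α) with hν
  set s := μ.toSignedMeasure - ν.toSignedMeasure with hs
  set j := s.toJordanDecomposition with hj
  obtain ⟨u, hu, hPu, hNuc⟩ := j.mutuallySingular
  have sapp : ∀ B : Set α, MeasurableSet B → s B = (μ B).toReal - (ν B).toReal :=
    fun B hB => Measure.toSignedMeasure_sub_apply hB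
  have japp : ∀ B : Set α, MeasurableSet B →
      s B = (j.posPart B).toReal - (j.negPart B).toReal := by
    intro B hB
    conv_lhs => rw [← s.toSignedMeasure_toJordanDecomposition]
    exact Measure.toSignedMeasure_sub_apply hB
  have hPuniv : j.posPart univ = j.posPart uᶜ := by
    rw [← measure_add_measure_compl hu, hPu, zero_add]
  have hNuniv : j.negPart univ = j.negPart u := by
    rw [← measure_add_measure_compl hu, hNuc, add_zero]
  have htv : tvDist μ ν = (j.posPart uᶜ).toReal + (j.negPart u).toReal := by
    rw [tvDist, SignedMeasure.totalVariation, ← hs, ← hj, Measure.add_apply, hPuniv, hNuniv,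
      ENNReal.toReal_add (measure_ne_top _ _) (measure_ne_top _ _)]
  have e1 : s uᶜ = (j.posPart uᶜ).toReal := by
    rw [japp uᶜ hu.compl, hNuc]; simp
  have e2 : s u = -(j.negPart u).toReal := by
    rw [japp u hu, hPu]; simp
  have key : tvDist μ ν = ((μ uᶜ).toReal - (ν uᶜ).toReal) - ((μ u).toReal - (ν u).toReal) := by
    rw [htv, ← sapp uᶜ hu.compl, ← sapp u hu, e1, e2]; ring
  have hμc : (μ uᶜ).toReal = 1 - (μ u).toReal := prob_compl_toReal μ hu
  have hzc : (μ {z}ᶜ).toReal = 1 - (μ {z}).toReal :=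
    prob_compl_toReal μ (MeasurableSet.singleton z)
  have hμu0 : 0 ≤ (μ u).toReal := ENNReal.toReal_nonneg
  by_cases hzin : z ∈ u
  · have hνu : (ν u).toReal = 1 := by rw [hν, Measure.dirac_apply' _ hu]; simp [hzin]
    have hνuc : (ν uᶜ).toReal = 0 := by
      rw [hν, Measure.dirac_apply' _ hu.compl]; simp [hzin]
    have hzu : (μ {z}).toReal ≤ (μ u).toReal :=
      ENNReal.toReal_mono (measure_ne_top _ _) (measure_mono (by simpa using hzin))
    rw [key, hνu, hνuc, hμc, hzc]; linarith
  · have hνu : (ν u).toReal = 0 := by rw [hν, Measure.dirac_apply' _ hu]; simp [hzin]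
    have hνuc : (ν uᶜ).toReal = 1 := by
      rw [hν, Measure.dirac_apply' _ hu.compl]; simp [hzin]
    have hz0 : 0 ≤ (μ {z}).toReal := ENNReal.toReal_nonneg
    have hz1 : (μ {z}).toReal ≤ 1 :=
      ENNReal.toReal_le_of_le_ofReal zero_le_one (by simpa using prob_le_one)
    rw [key, hνu, hνuc, hμc, hzc]; linarith

/-! ### The representative of a point on the circle -/

noncomputable def rep (χ : AddCircle (1:ℝ)) : ℝ :=
  ((AddCircle.equivIoc 1 (-(1/2)) χ : Ioc (-(1/2):ℝ) (-(1/2)+1)) : ℝ)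

lemma rep_mem (χ : AddCircle (1:ℝ)) : rep χ ∈ Ioc (-(1/2):ℝ) (1/2) := by
  have := (AddCircle.equivIoc 1 (-(1/2)) χ).2
  norm_num at this ⊢
  exact this

lemma rep_coe (χ : AddCircle (1:ℝ)) : ((rep χ : ℝ) : AddCircle (1:ℝ)) = χ :=
  (AddCircle.equivIoc 1 (-(1/2))).symm_apply_apply χ

lemma rep_coe_eq {x : ℝ} (hx : x ∈ Ioc (-(1/2):ℝ) (1/2)) : rep ((x : ℝ) : AddCircle (1:ℝ)) = x := by
  rw [rep, AddCircle.equivIoc, QuotientAddGroup.equivIocMod_coe]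
  exact (toIocMod_eq_self zero_lt_one).mpr (by constructor <;> [exact hx.1; linarith [hx.2]])

lemma rep_spec {c : AddCircle (1:ℝ)} {r' : ℝ} (h : c = (r' : AddCircle (1:ℝ)))
    (hr : |r'| < 1/2) : rep c = r' := by
  rw [h]
  exact rep_coe_eq ⟨by linarith [(abs_lt.mp hr).1], by linarith [(abs_lt.mp hr).2]⟩

lemma measurable_rep : Measurable rep := by
  have : rep = (fun y : Ioc (-(1/2):ℝ) (-(1/2)+1) => (y : ℝ)) ∘
      (AddCircle.measurableEquivIoc (T := 1) (-(1/2))) := rfl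
  rw [this]
  exact measurable_subtype_coe.comp (AddCircle.measurableEquivIoc (T := 1) (-(1/2))).measurable

lemma rep_eq_zero_iff (χ : AddCircle (1:ℝ)) : rep χ = 0 ↔ χ = 0 := by
  constructor
  · intro h
    rw [← rep_coe χ, h]
    norm_num
  · intro h
    subst h
    have : ((0:ℝ) : AddCircle (1:ℝ)) = 0 := by norm_num
    rw [← this, rep_coe_eq (by norm_num)]

lemma char_ge (χ : AddCircle (1:ℝ)) (h : 1/6 ≤ |rep χ|) : 1 ≤ ‖(χ.toCircle : ℂ) - 1‖ := by
  set x := rep χ with hx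
  have hχ : χ = ((x : ℝ) : AddCircle (1:ℝ)) := (rep_coe χ).symm
  rw [hχ, AddCircle.toCircle_apply_mk, Circle.coe_exp, Complex.exp_mul_I]
  have hx2 : |x| ≤ 1/2 := abs_le.mpr ⟨le_of_lt (rep_mem χ).1, (rep_mem χ).2⟩
  set θ : ℝ := 2 * π / 1 * x with hθ
  have hcos : Real.cos θ ≤ 1/2 := by
    have hcabs : Real.cos θ = Real.cos |θ| := (Real.cos_abs θ).symm
    have habs : |θ| = 2 * π * |x| := by
      rw [hθ, abs_mul, abs_of_nonneg (by positivity : (0:ℝ) ≤ 2 * π / 1)]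
      ring
    have h1 : π/3 ≤ |θ| := by rw [habs]; nlinarith [pi_pos]
    have h2 : |θ| ≤ π := by rw [habs]; nlinarith [pi_pos]
    have := Real.cos_le_cos_of_nonneg_of_le_pi (by positivity : (0:ℝ) ≤ π/3) h2 h1
    rw [Real.cos_pi_div_three] at this
    rwa [hcabs]
  have hnormsq : ‖(Complex.cos θ + Complex.sin θ * Complex.I) - 1‖^2 = 2 - 2 * Real.cos θ := by
    rw [Complex.sq_norm, Complex.normSq_apply]
    simp [Complex.cos_ofReal_re, Complex.sin_ofReal_re]
    nlinarith [Real.sin_sq_add_cos_sq θ]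
  nlinarith [norm_nonneg ((Complex.cos θ + Complex.sin θ * Complex.I) - 1), hnormsq]

set_option maxHeartbeats 1000000 in
lemma core_real (x y : ℝ) (hx : |x| < 1/6) (hy : |y| < 1/6) (hsign : 0 ≤ x * y)
    (h : (x ≠ 0 ∧ |y| ≤ |x|) ∨ |x| < |y|) :
    |y| < |x + 2*y| ∧ 0 ≤ (x + 2*y) * y ∧ |x + 2*y| < 1/2 := by
  have hpos : 0 < |x| + |y| := by
    rcases h with ⟨h1, _⟩ | h1
    · have := abs_pos.mpr h1
      linarith [abs_nonneg y]
    · linarith [abs_nonneg x]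
  rcases abs_cases x with ⟨e1, s1⟩ | ⟨e1, s1⟩ <;>
  rcases abs_cases y with ⟨e2, s2⟩ | ⟨e2, s2⟩ <;>
  rcases abs_cases (x + 2*y) with ⟨e3, s3⟩ | ⟨e3, s3⟩ <;>
  exact ⟨by nlinarith [e1, e2, e3, s1, s2, s3, hsign, hx, hy, hpos],
    by nlinarith [e1, e2, e3, s1, s2, s3, hsign, hx, hy, hpos],
    by nlinarith [e1, e2, e3, s1, s2, s3, hsign, hx, hy, hpos]⟩

lemma h_flip {x y : ℝ} (h : (x ≠ 0 ∧ |y| ≤ |x|) ∨ |x| < |y|) :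
    (y ≠ 0 ∧ |x| ≤ |y|) ∨ |y| < |x| := by
  rcases h with ⟨h1, h2⟩ | h1
  · rcases lt_or_ge |y| |x| with c | c
    · exact Or.inr c
    · refine Or.inl ⟨?_, c⟩
      have : 0 < |x| := abs_pos.mpr h1
      exact abs_pos.mp (lt_of_lt_of_le this c)
  · exact Or.inl ⟨abs_pos.mp (lt_of_le_of_lt (abs_nonneg x) h1), le_of_lt h1⟩

end TppAux

set_option maxHeartbeats 4000000 in
/-- Property (T⁺⁺) for `SL₂(ℤ) ↷ ℤ²` with constant `40`: if a probability
measure `μ` on `𝕋²` satisfies `‖h·μ − μ‖ < ε/40` for `h ∈ F₂ = {±e₁, ±e₂}`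
(the total variation of the complex measure with density `e^{2πi⟨h,·⟩} − 1`,
i.e. `∫ |e^{2πi⟨h,χ⟩} − 1| dμ(χ)`) and `‖g_*μ − μ‖ < ε/40` for the elementary
matrices `g ∈ F₁ = {L(±1), U(±1)}`, then `‖μ − δ₀‖ < ε`. -/
theorem SL2_Z2_property_Tpp (ε : ℝ) (hε : 0 < ε)
    (μ : Measure (Fin 2 → AddCircle (1 : ℝ))) [IsProbabilityMeasure μ]
    (hchar : ∀ h ∈ ({![1, 0], ![-1, 0], ![0, 1], ![0, -1]} : Set (Fin 2 → ℤ)),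
      (∫ χ, ‖(((∑ i, h i • χ i : AddCircle (1 : ℝ)).toCircle : ℂ) - 1)‖ ∂μ) < ε / 40)
    (hpush : ∀ g ∈ ({!![1, 0; 1, 1], !![1, 0; -1, 1], !![1, 1; 0, 1],
        !![1, -1; 0, 1]} : Set (Matrix (Fin 2) (Fin 2) ℤ)),
      tvDist (μ.map fun x i => ∑ j, g i j • x j) μ < ε / 40) :
    tvDist μ (Measure.dirac (fun _ => (0 : AddCircle (1 : ℝ)))) < ε := by
  classical
  open TppAux in
  set δ := ε / 40 with hδdef
  have hδ : 0 < δ := by positivity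
  set X := Fin 2 → AddCircle (1:ℝ)
  -- basic measurability
  have m0 : Measurable fun χ : X => TppAux.rep (χ 0) :=
    TppAux.measurable_rep.comp (measurable_pi_apply 0)
  have m1 : Measurable fun χ : X => TppAux.rep (χ 1) :=
    TppAux.measurable_rep.comp (measurable_pi_apply 1)
  -- the sets
  set Ap : Set X := {χ | (TppAux.rep (χ 0) ≠ 0 ∧ |TppAux.rep (χ 1)| ≤ |TppAux.rep (χ 0)|) ∧
      0 ≤ TppAux.rep (χ 0) * TppAux.rep (χ 1)} with hApdef
  set Bp : Set X := {χ | |TppAux.rep (χ 0)| < |TppAux.rep (χ 1)| ∧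
      0 ≤ TppAux.rep (χ 0) * TppAux.rep (χ 1)} with hBpdef
  set Am : Set X := {χ | (TppAux.rep (χ 0) ≠ 0 ∧ |TppAux.rep (χ 1)| ≤ |TppAux.rep (χ 0)|) ∧
      TppAux.rep (χ 0) * TppAux.rep (χ 1) ≤ 0} with hAmdef
  set Bm : Set X := {χ | |TppAux.rep (χ 0)| < |TppAux.rep (χ 1)| ∧
      TppAux.rep (χ 0) * TppAux.rep (χ 1) ≤ 0} with hBmdef
  set D : Set X := {χ | |TppAux.rep (χ 0)| < 1/6 ∧ |TppAux.rep (χ 1)| < 1/6} with hDdef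
  have mAp : MeasurableSet Ap :=
    ((measurableSet_eq_fun m0 measurable_const).compl.inter
      (measurableSet_le m1.abs m0.abs)).inter (measurableSet_le measurable_const (m0.mul m1))
  have mBp : MeasurableSet Bp :=
    (measurableSet_lt m0.abs m1.abs).inter (measurableSet_le measurable_const (m0.mul m1))
  have mAm : MeasurableSet Am :=
    ((measurableSet_eq_fun m0 measurable_const).compl.inter
      (measurableSet_le m1.abs m0.abs)).inter (measurableSet_le (m0.mul m1) measurable_const)
  have mBm : MeasurableSet Bm :=
    (measurableSet_lt m0.abs m1.abs).inter (measurableSet_le (m0.mul m1) measurable_const)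
  have mD : MeasurableSet D :=
    (measurableSet_lt m0.abs measurable_const).inter (measurableSet_lt m1.abs measurable_const)
  -- Markov bounds
  have markov : ∀ i : Fin 2, ∀ hv : Fin 2 → ℤ, (∀ χ : X, (∑ k, hv k • χ k) = χ i) →
      hv ∈ ({![1, 0], ![-1, 0], ![0, 1], ![0, -1]} : Set (Fin 2 → ℤ)) →
      (μ {χ : X | 1/6 ≤ |TppAux.rep (χ i)|}).toReal < δ := by
    intro i hv hsum hmem
    have hint := hchar hv hmem
    simp only [hsum] at hint
    have hfcont : Continuous fun χ : X => ‖(((χ i).toCircle : ℂ) - 1)‖ :=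
      ((continuous_subtype_val.comp (AddCircle.continuous_toCircle.comp
        (continuous_apply i))).sub continuous_const).norm
    have hfint : Integrable (fun χ : X => ‖(((χ i).toCircle : ℂ) - 1)‖) μ := by
      rw [← integrableOn_univ]
      exact hfcont.continuousOn.integrableOn_compact isCompact_univ
    have hm := mul_meas_ge_le_integral_of_nonneg
      (ae_of_all μ fun χ => norm_nonneg _) hfint 1
    have hsub : {χ : X | 1/6 ≤ |TppAux.rep (χ i)|} ⊆
        {χ : X | 1 ≤ ‖(((χ i).toCircle : ℂ) - 1)‖} :=
      fun χ hχ => TppAux.char_ge (χ i) hχ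
    have := ENNReal.toReal_mono (measure_ne_top μ _) (measure_mono hsub)
    calc (μ {χ : X | 1/6 ≤ |TppAux.rep (χ i)|}).toReal
        ≤ (μ {χ : X | 1 ≤ ‖(((χ i).toCircle : ℂ) - 1)‖}).toReal := this
      _ ≤ ∫ χ, ‖(((χ i).toCircle : ℂ) - 1)‖ ∂μ := by rw [measureReal_def] at hm; linarith [hm]
      _ < δ := hint
  have hM0 : (μ {χ : X | 1/6 ≤ |TppAux.rep (χ 0)|}).toReal < δ := by
    refine markov 0 ![1, 0] (fun χ => ?_) (by simp)
    simp [Fin.sum_univ_two]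
  have hM1 : (μ {χ : X | 1/6 ≤ |TppAux.rep (χ 1)|}).toReal < δ := by
    refine markov 1 ![0, 1] (fun χ => ?_) (by simp)
    simp [Fin.sum_univ_two]
  have hDc : (μ Dᶜ).toReal < 2 * δ := by
    have hsub : Dᶜ ⊆ {χ : X | 1/6 ≤ |TppAux.rep (χ 0)|} ∪ {χ : X | 1/6 ≤ |TppAux.rep (χ 1)|} := by
      intro χ hχ
      rw [hDdef] at hχ
      simp only [Set.mem_compl_iff, Set.mem_setOf_eq, not_and_or, not_lt] at hχ
      rcases hχ with h | h
      · exact Or.inl h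
      · exact Or.inr h
    calc (μ Dᶜ).toReal
        ≤ ((μ {χ : X | 1/6 ≤ |TppAux.rep (χ 0)|}) + μ {χ : X | 1/6 ≤ |TppAux.rep (χ 1)|}).toReal :=
          ENNReal.toReal_mono (by finiteness) (le_trans (measure_mono hsub) (measure_union_le _ _))
      _ = (μ {χ : X | 1/6 ≤ |TppAux.rep (χ 0)|}).toReal
          + (μ {χ : X | 1/6 ≤ |TppAux.rep (χ 1)|}).toReal :=
          ENNReal.toReal_add (measure_ne_top _ _) (measure_ne_top _ _)
      _ < 2 * δ := by linarith
  -- pushforward step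
  have hstep : ∀ M ∈ ({!![1, 0; 1, 1], !![1, 0; -1, 1], !![1, 1; 0, 1],
      !![1, -1; 0, 1]} : Set (Matrix (Fin 2) (Fin 2) ℤ)), ∀ B : Set X, MeasurableSet B →
      (μ ((fun (x : X) i => ∑ j, M i j • x j) ⁻¹' B)).toReal ≤ (μ B).toReal + δ := by
    intro M hM B hB
    have hTm : Measurable (fun (x : X) i => ∑ j, M i j • x j) :=
      measurable_pi_lambda _ fun i => Finset.measurable_sum _ fun j _ =>
        ((continuous_zsmul (M i j)).measurable.comp (measurable_pi_apply j))
    have h1 := TppAux.tv_bound (μ.map fun (x : X) i => ∑ j, M i j • x j) μ hB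
    rw [Measure.map_apply hTm hB] at h1
    linarith [hpush M hM]
  have hTmeas : ∀ M : Matrix (Fin 2) (Fin 2) ℤ, Measurable (fun (x : X) i => ∑ j, M i j • x j) :=
    fun M => measurable_pi_lambda _ fun i => Finset.measurable_sum _ fun j _ =>
      ((continuous_zsmul (M i j)).measurable.comp (measurable_pi_apply j))
  -- the generic measure chain
  have chain : ∀ M ∈ ({!![1, 0; 1, 1], !![1, 0; -1, 1], !![1, 1; 0, 1],
      !![1, -1; 0, 1]} : Set (Matrix (Fin 2) (Fin 2) ℤ)), ∀ E F : Set X, MeasurableSet E →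
      MeasurableSet F → Disjoint (E ∩ D) (F ∩ D) →
      ((E ∪ F) ∩ D ⊆ (fun (x : X) i => ∑ j, M i j • x j) ⁻¹'
        ((fun (x : X) i => ∑ j, M i j • x j) ⁻¹' E)) →
      (μ (F ∩ D)).toReal ≤ (μ Dᶜ).toReal + 2 * δ := by
    intro M hM E F hE hF hdisj hincl
    have hTm := hTmeas M
    have s1 : (μ ((E ∪ F) ∩ D)).toReal ≤ (μ E).toReal + 2 * δ := by
      have t1 : (μ ((E ∪ F) ∩ D)).toReal ≤
          (μ ((fun (x : X) i => ∑ j, M i j • x j) ⁻¹'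
            ((fun (x : X) i => ∑ j, M i j • x j) ⁻¹' E))).toReal :=
        ENNReal.toReal_mono (measure_ne_top _ _) (measure_mono hincl)
      have t2 := hstep M hM ((fun (x : X) i => ∑ j, M i j • x j) ⁻¹' E) (hTm hE)
      have t3 := hstep M hM E hE
      linarith
    have s2 : (μ ((E ∪ F) ∩ D)).toReal = (μ (E ∩ D)).toReal + (μ (F ∩ D)).toReal := by
      rw [Set.union_inter_distrib_right, measure_union hdisj (hF.inter mD),
        ENNReal.toReal_add (measure_ne_top _ _) (measure_ne_top _ _)]
    have s3 : (μ E).toReal ≤ (μ (E ∩ D)).toReal + (μ Dᶜ).toReal := by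
      have hsub : E ⊆ (E ∩ D) ∪ Dᶜ := by
        intro χ hχ
        by_cases hd : χ ∈ D
        · exact Or.inl ⟨hχ, hd⟩
        · exact Or.inr hd
      calc (μ E).toReal ≤ ((μ (E ∩ D)) + μ Dᶜ).toReal :=
            ENNReal.toReal_mono (by finiteness)
              (le_trans (measure_mono hsub) (measure_union_le _ _))
        _ = (μ (E ∩ D)).toReal + (μ Dᶜ).toReal :=
            ENNReal.toReal_add (measure_ne_top _ _) (measure_ne_top _ _)
    linarith
  -- disjointness
  have hdisjp : Disjoint (Ap ∩ D) (Bp ∩ D) := by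
    rw [Set.disjoint_left]
    rintro χ ⟨h1, -⟩ ⟨h2, -⟩
    exact absurd h2.1 (not_lt.mpr h1.1.2)
  have hdisjm : Disjoint (Am ∩ D) (Bm ∩ D) := by
    rw [Set.disjoint_left]
    rintro χ ⟨h1, -⟩ ⟨h2, -⟩
    exact absurd h2.1 (not_lt.mpr h1.1.2)
  -- the four inclusions
  have hUp : (Ap ∪ Bp) ∩ D ⊆ (fun (x : X) i => ∑ j, (!![1, 1; 0, 1] :
      Matrix (Fin 2) (Fin 2) ℤ) i j • x j) ⁻¹' ((fun (x : X) i => ∑ j, (!![1, 1; 0, 1] :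
      Matrix (Fin 2) (Fin 2) ℤ) i j • x j) ⁻¹' Ap) := by
    rintro χ ⟨hAB, hD6⟩
    have hx6 : |TppAux.rep (χ 0)| < 1/6 := hD6.1
    have hy6 : |TppAux.rep (χ 1)| < 1/6 := hD6.2
    have hsign : 0 ≤ TppAux.rep (χ 0) * TppAux.rep (χ 1) := by
      rcases hAB with h | h
      · exact h.2
      · exact h.2
    have hh : (TppAux.rep (χ 0) ≠ 0 ∧ |TppAux.rep (χ 1)| ≤ |TppAux.rep (χ 0)|) ∨
        |TppAux.rep (χ 0)| < |TppAux.rep (χ 1)| := by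
      rcases hAB with h | h
      · exact Or.inl h.1
      · exact Or.inr h.1
    obtain ⟨hlt, hsgn2, hhalf⟩ := TppAux.core_real _ _ hx6 hy6 hsign hh
    simp only [Set.mem_preimage]
    have c0 : (fun (x : X) i => ∑ j, (!![1, 1; 0, 1] : Matrix (Fin 2) (Fin 2) ℤ) i j • x j)
        ((fun (x : X) i => ∑ j, (!![1, 1; 0, 1] : Matrix (Fin 2) (Fin 2) ℤ) i j • x j) χ) 0
        = χ 0 + χ 1 + χ 1 := by
      simp [Fin.sum_univ_two, add_assoc]
    have c1 : (fun (x : X) i => ∑ j, (!![1, 1; 0, 1] : Matrix (Fin 2) (Fin 2) ℤ) i j • x j)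
        ((fun (x : X) i => ∑ j, (!![1, 1; 0, 1] : Matrix (Fin 2) (Fin 2) ℤ) i j • x j) χ) 1
        = χ 1 := by
      simp [Fin.sum_univ_two]
    have hr0 : TppAux.rep ((fun (x : X) i => ∑ j, (!![1, 1; 0, 1] :
        Matrix (Fin 2) (Fin 2) ℤ) i j • x j) ((fun (x : X) i => ∑ j, (!![1, 1; 0, 1] :
        Matrix (Fin 2) (Fin 2) ℤ) i j • x j) χ) 0)
        = TppAux.rep (χ 0) + 2 * TppAux.rep (χ 1) := by
      rw [c0]
      refine TppAux.rep_spec ?_ hhalf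
      conv_lhs => rw [← TppAux.rep_coe (χ 0), ← TppAux.rep_coe (χ 1)]
      rw [show TppAux.rep (χ 0) + 2 * TppAux.rep (χ 1) =
        TppAux.rep (χ 0) + TppAux.rep (χ 1) + TppAux.rep (χ 1) by ring,
        QuotientAddGroup.mk_add, QuotientAddGroup.mk_add]
    have hr1 : TppAux.rep ((fun (x : X) i => ∑ j, (!![1, 1; 0, 1] :
        Matrix (Fin 2) (Fin 2) ℤ) i j • x j) ((fun (x : X) i => ∑ j, (!![1, 1; 0, 1] :
        Matrix (Fin 2) (Fin 2) ℤ) i j • x j) χ) 1) = TppAux.rep (χ 1) := by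
      rw [c1]
    simp only [hApdef, Set.mem_setOf_eq]
    refine ⟨⟨?_, ?_⟩, ?_⟩
    · rw [hr0]
      exact abs_pos.mp (lt_of_le_of_lt (abs_nonneg _) hlt)
    · rw [hr0, hr1]
      exact le_of_lt hlt
    · rw [hr0, hr1]
      exact hsgn2
  have hUm : (Am ∪ Bm) ∩ D ⊆ (fun (x : X) i => ∑ j, (!![1, -1; 0, 1] :
      Matrix (Fin 2) (Fin 2) ℤ) i j • x j) ⁻¹' ((fun (x : X) i => ∑ j, (!![1, -1; 0, 1] :
      Matrix (Fin 2) (Fin 2) ℤ) i j • x j) ⁻¹' Am) := by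
    rintro χ ⟨hAB, hD6⟩
    have hx6 : |TppAux.rep (χ 0)| < 1/6 := hD6.1
    have hy6 : |-TppAux.rep (χ 1)| < 1/6 := by rw [abs_neg]; exact hD6.2
    have hsign : 0 ≤ TppAux.rep (χ 0) * -TppAux.rep (χ 1) := by
      rcases hAB with h | h <;> nlinarith [h.2]
    have hh : (TppAux.rep (χ 0) ≠ 0 ∧ |-TppAux.rep (χ 1)| ≤ |TppAux.rep (χ 0)|) ∨
        |TppAux.rep (χ 0)| < |-TppAux.rep (χ 1)| := by
      rw [abs_neg]
      rcases hAB with h | h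
      · exact Or.inl h.1
      · exact Or.inr h.1
    obtain ⟨hlt, hsgn2, hhalf⟩ := TppAux.core_real _ _ hx6 hy6 hsign hh
    simp only [Set.mem_preimage]
    have c0 : (fun (x : X) i => ∑ j, (!![1, -1; 0, 1] : Matrix (Fin 2) (Fin 2) ℤ) i j • x j)
        ((fun (x : X) i => ∑ j, (!![1, -1; 0, 1] : Matrix (Fin 2) (Fin 2) ℤ) i j • x j) χ) 0
        = χ 0 - χ 1 - χ 1 := by
      simp [Fin.sum_univ_two]
      abel
    have c1 : (fun (x : X) i => ∑ j, (!![1, -1; 0, 1] : Matrix (Fin 2) (Fin 2) ℤ) i j • x j)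
        ((fun (x : X) i => ∑ j, (!![1, -1; 0, 1] : Matrix (Fin 2) (Fin 2) ℤ) i j • x j) χ) 1
        = χ 1 := by
      simp [Fin.sum_univ_two]
    have hr0 : TppAux.rep ((fun (x : X) i => ∑ j, (!![1, -1; 0, 1] :
        Matrix (Fin 2) (Fin 2) ℤ) i j • x j) ((fun (x : X) i => ∑ j, (!![1, -1; 0, 1] :
        Matrix (Fin 2) (Fin 2) ℤ) i j • x j) χ) 0)
        = TppAux.rep (χ 0) + 2 * -TppAux.rep (χ 1) := by
      rw [c0]
      refine TppAux.rep_spec ?_ hhalf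
      conv_lhs => rw [← TppAux.rep_coe (χ 0), ← TppAux.rep_coe (χ 1)]
      rw [show TppAux.rep (χ 0) + 2 * -TppAux.rep (χ 1) =
        TppAux.rep (χ 0) - TppAux.rep (χ 1) - TppAux.rep (χ 1) by ring,
        QuotientAddGroup.mk_sub, QuotientAddGroup.mk_sub]
    have hr1 : TppAux.rep ((fun (x : X) i => ∑ j, (!![1, -1; 0, 1] :
        Matrix (Fin 2) (Fin 2) ℤ) i j • x j) ((fun (x : X) i => ∑ j, (!![1, -1; 0, 1] :
        Matrix (Fin 2) (Fin 2) ℤ) i j • x j) χ) 1) = TppAux.rep (χ 1) := by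
      rw [c1]
    simp only [hAmdef, Set.mem_setOf_eq]
    refine ⟨⟨?_, ?_⟩, ?_⟩
    · rw [hr0]
      exact abs_pos.mp (lt_of_le_of_lt (abs_nonneg _) hlt)
    · rw [hr0, hr1]
      rw [← abs_neg (TppAux.rep (χ 1))]
      exact le_of_lt hlt
    · rw [hr0, hr1]
      nlinarith [hsgn2]
  have hLp : (Bp ∪ Ap) ∩ D ⊆ (fun (x : X) i => ∑ j, (!![1, 0; 1, 1] :
      Matrix (Fin 2) (Fin 2) ℤ) i j • x j) ⁻¹' ((fun (x : X) i => ∑ j, (!![1, 0; 1, 1] :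
      Matrix (Fin 2) (Fin 2) ℤ) i j • x j) ⁻¹' Bp) := by
    rintro χ ⟨hAB, hD6⟩
    have hx6 : |TppAux.rep (χ 0)| < 1/6 := hD6.1
    have hy6 : |TppAux.rep (χ 1)| < 1/6 := hD6.2
    have hsign : 0 ≤ TppAux.rep (χ 1) * TppAux.rep (χ 0) := by
      rcases hAB with h | h <;> nlinarith [h.2]
    have hh : (TppAux.rep (χ 1) ≠ 0 ∧ |TppAux.rep (χ 0)| ≤ |TppAux.rep (χ 1)|) ∨
        |TppAux.rep (χ 1)| < |TppAux.rep (χ 0)| := by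
      refine TppAux.h_flip ?_
      rcases hAB with h | h
      · exact Or.inr h.1
      · exact Or.inl h.1
    obtain ⟨hlt, hsgn2, hhalf⟩ := TppAux.core_real _ _ hy6 hx6 hsign hh
    simp only [Set.mem_preimage]
    have c0 : (fun (x : X) i => ∑ j, (!![1, 0; 1, 1] : Matrix (Fin 2) (Fin 2) ℤ) i j • x j)
        ((fun (x : X) i => ∑ j, (!![1, 0; 1, 1] : Matrix (Fin 2) (Fin 2) ℤ) i j • x j) χ) 0
        = χ 0 := by
      simp [Fin.sum_univ_two]
    have c1 : (fun (x : X) i => ∑ j, (!![1, 0; 1, 1] : Matrix (Fin 2) (Fin 2) ℤ) i j • x j)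
        ((fun (x : X) i => ∑ j, (!![1, 0; 1, 1] : Matrix (Fin 2) (Fin 2) ℤ) i j • x j) χ) 1
        = χ 0 + (χ 0 + χ 1) := by
      simp [Fin.sum_univ_two]
    have hr0 : TppAux.rep ((fun (x : X) i => ∑ j, (!![1, 0; 1, 1] :
        Matrix (Fin 2) (Fin 2) ℤ) i j • x j) ((fun (x : X) i => ∑ j, (!![1, 0; 1, 1] :
        Matrix (Fin 2) (Fin 2) ℤ) i j • x j) χ) 0) = TppAux.rep (χ 0) := by
      rw [c0]
    have hr1 : TppAux.rep ((fun (x : X) i => ∑ j, (!![1, 0; 1, 1] :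
        Matrix (Fin 2) (Fin 2) ℤ) i j • x j) ((fun (x : X) i => ∑ j, (!![1, 0; 1, 1] :
        Matrix (Fin 2) (Fin 2) ℤ) i j • x j) χ) 1)
        = TppAux.rep (χ 1) + 2 * TppAux.rep (χ 0) := by
      rw [c1]
      refine TppAux.rep_spec ?_ hhalf
      conv_lhs => rw [← TppAux.rep_coe (χ 0), ← TppAux.rep_coe (χ 1)]
      rw [show TppAux.rep (χ 1) + 2 * TppAux.rep (χ 0) =
        TppAux.rep (χ 0) + (TppAux.rep (χ 0) + TppAux.rep (χ 1)) by ring,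
        QuotientAddGroup.mk_add, QuotientAddGroup.mk_add]
    simp only [hBpdef, Set.mem_setOf_eq]
    refine ⟨?_, ?_⟩
    · rw [hr0, hr1]
      exact hlt
    · rw [hr0, hr1]
      nlinarith [hsgn2]
  have hLm : (Bm ∪ Am) ∩ D ⊆ (fun (x : X) i => ∑ j, (!![1, 0; -1, 1] :
      Matrix (Fin 2) (Fin 2) ℤ) i j • x j) ⁻¹' ((fun (x : X) i => ∑ j, (!![1, 0; -1, 1] :
      Matrix (Fin 2) (Fin 2) ℤ) i j • x j) ⁻¹' Bm) := by
    rintro χ ⟨hAB, hD6⟩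
    have hx6 : |-TppAux.rep (χ 0)| < 1/6 := by rw [abs_neg]; exact hD6.1
    have hy6 : |TppAux.rep (χ 1)| < 1/6 := hD6.2
    have hsign : 0 ≤ TppAux.rep (χ 1) * -TppAux.rep (χ 0) := by
      rcases hAB with h | h <;> nlinarith [h.2]
    have hh : (TppAux.rep (χ 1) ≠ 0 ∧ |-TppAux.rep (χ 0)| ≤ |TppAux.rep (χ 1)|) ∨
        |TppAux.rep (χ 1)| < |-TppAux.rep (χ 0)| := by
      rw [abs_neg]
      refine TppAux.h_flip ?_
      rcases hAB with h | h
      · exact Or.inr h.1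
      · exact Or.inl h.1
    obtain ⟨hlt, hsgn2, hhalf⟩ := TppAux.core_real _ _ hy6 hx6 hsign hh
    simp only [Set.mem_preimage]
    have c0 : (fun (x : X) i => ∑ j, (!![1, 0; -1, 1] : Matrix (Fin 2) (Fin 2) ℤ) i j • x j)
        ((fun (x : X) i => ∑ j, (!![1, 0; -1, 1] : Matrix (Fin 2) (Fin 2) ℤ) i j • x j) χ) 0
        = χ 0 := by
      simp [Fin.sum_univ_two]
    have c1 : (fun (x : X) i => ∑ j, (!![1, 0; -1, 1] : Matrix (Fin 2) (Fin 2) ℤ) i j • x j)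
        ((fun (x : X) i => ∑ j, (!![1, 0; -1, 1] : Matrix (Fin 2) (Fin 2) ℤ) i j • x j) χ) 1
        = χ 1 - χ 0 - χ 0 := by
      simp [Fin.sum_univ_two]
      abel
    have hr0 : TppAux.rep ((fun (x : X) i => ∑ j, (!![1, 0; -1, 1] :
        Matrix (Fin 2) (Fin 2) ℤ) i j • x j) ((fun (x : X) i => ∑ j, (!![1, 0; -1, 1] :
        Matrix (Fin 2) (Fin 2) ℤ) i j • x j) χ) 0) = TppAux.rep (χ 0) := by
      rw [c0]
    have hr1 : TppAux.rep ((fun (x : X) i => ∑ j, (!![1, 0; -1, 1] :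
        Matrix (Fin 2) (Fin 2) ℤ) i j • x j) ((fun (x : X) i => ∑ j, (!![1, 0; -1, 1] :
        Matrix (Fin 2) (Fin 2) ℤ) i j • x j) χ) 1)
        = TppAux.rep (χ 1) + 2 * -TppAux.rep (χ 0) := by
      rw [c1]
      refine TppAux.rep_spec ?_ hhalf
      conv_lhs => rw [← TppAux.rep_coe (χ 0), ← TppAux.rep_coe (χ 1)]
      rw [show TppAux.rep (χ 1) + 2 * -TppAux.rep (χ 0) =
        TppAux.rep (χ 1) - TppAux.rep (χ 0) - TppAux.rep (χ 0) by ring,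
        QuotientAddGroup.mk_sub, QuotientAddGroup.mk_sub]
    simp only [hBmdef, Set.mem_setOf_eq]
    refine ⟨?_, ?_⟩
    · rw [hr0, hr1]
      rw [← abs_neg (TppAux.rep (χ 0))]
      exact hlt
    · rw [hr0, hr1]
      nlinarith [hsgn2]
  -- the four measure bounds
  have hBpD : (μ (Bp ∩ D)).toReal ≤ (μ Dᶜ).toReal + 2 * δ :=
    chain _ (by simp) Ap Bp mAp mBp hdisjp hUp
  have hBmD : (μ (Bm ∩ D)).toReal ≤ (μ Dᶜ).toReal + 2 * δ :=
    chain _ (by simp) Am Bm mAm mBm hdisjm hUm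
  have hApD : (μ (Ap ∩ D)).toReal ≤ (μ Dᶜ).toReal + 2 * δ :=
    chain _ (by simp) Bp Ap mBp mAp hdisjp.symm hLp
  have hAmD : (μ (Am ∩ D)).toReal ≤ (μ Dᶜ).toReal + 2 * δ :=
    chain _ (by simp) Bm Am mBm mAm hdisjm.symm hLm
  -- covering the punctured torus
  set z : X := (fun _ => (0 : AddCircle (1:ℝ))) with hzdef
  have hcover : ({z}ᶜ : Set X) ⊆ Dᶜ ∪ (Ap ∩ D) ∪ (Bp ∩ D) ∪ (Am ∩ D) ∪ (Bm ∩ D) := by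
    intro χ hχ
    have hmain : χ ∈ Dᶜ ∨ χ ∈ Ap ∩ D ∨ χ ∈ Bp ∩ D ∨ χ ∈ Am ∩ D ∨ χ ∈ Bm ∩ D := by
      by_cases hd : χ ∈ D
      · have hxy : ¬(TppAux.rep (χ 0) = 0 ∧ TppAux.rep (χ 1) = 0) := by
          rintro ⟨h0, h1⟩
          apply hχ
          have e0 : χ 0 = 0 := (TppAux.rep_eq_zero_iff (χ 0)).mp h0
          have e1 : χ 1 = 0 := (TppAux.rep_eq_zero_iff (χ 1)).mp h1
          have : χ = z := by
            funext i
            fin_cases i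
            · exact e0
            · exact e1
          simpa [hzdef] using this
        rcases le_or_gt |TppAux.rep (χ 1)| |TppAux.rep (χ 0)| with hc | hc
        · have hx0 : TppAux.rep (χ 0) ≠ 0 := by
            intro h0
            apply hxy
            refine ⟨h0, ?_⟩
            rw [h0] at hc
            simp only [abs_zero] at hc
            exact abs_eq_zero.mp (le_antisymm hc (abs_nonneg _))
          rcases le_total 0 (TppAux.rep (χ 0) * TppAux.rep (χ 1)) with hs | hs
          · exact Or.inr (Or.inl ⟨⟨⟨hx0, hc⟩, hs⟩, hd⟩)
          · exact Or.inr (Or.inr (Or.inr (Or.inl ⟨⟨⟨hx0, hc⟩, hs⟩, hd⟩)))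
        · rcases le_total 0 (TppAux.rep (χ 0) * TppAux.rep (χ 1)) with hs | hs
          · exact Or.inr (Or.inr (Or.inl ⟨⟨hc, hs⟩, hd⟩))
          · exact Or.inr (Or.inr (Or.inr (Or.inr ⟨⟨hc, hs⟩, hd⟩)))
      · exact Or.inl hd
    simp only [Set.mem_union]
    tauto
  have hsum : (μ ({z}ᶜ : Set X)).toReal ≤ (μ Dᶜ).toReal + (μ (Ap ∩ D)).toReal
      + (μ (Bp ∩ D)).toReal + (μ (Am ∩ D)).toReal + (μ (Bm ∩ D)).toReal := by
    have h1 : μ ({z}ᶜ : Set X) ≤ μ Dᶜ + μ (Ap ∩ D) + μ (Bp ∩ D) + μ (Am ∩ D) + μ (Bm ∩ D) := by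
      refine le_trans (measure_mono hcover) ?_
      refine le_trans (measure_union_le _ _) (add_le_add ?_ le_rfl)
      refine le_trans (measure_union_le _ _) (add_le_add ?_ le_rfl)
      refine le_trans (measure_union_le _ _) (add_le_add ?_ le_rfl)
      exact measure_union_le _ _
    have h2 := ENNReal.toReal_mono (by finiteness) h1
    rw [ENNReal.toReal_add, ENNReal.toReal_add, ENNReal.toReal_add, ENNReal.toReal_add] at h2
    · exact h2
    all_goals finiteness
  have hfinal := TppAux.tv_dirac_le μ z
  have : (μ ({z}ᶜ : Set X)).toReal < 18 * δ := by linarith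
  calc tvDist μ (Measure.dirac z) ≤ 2 * (μ ({z}ᶜ : Set X)).toReal := hfinal
    _ < 36 * δ := by linarith
    _ < ε := by rw [hδdef]; linarith
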